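/- Let n ≥ 1, κ ∈ [0,1], and let k : Fin n → Fin 2 be an outcome string with j = #{m : k(m) = 0} ≥ 1 zeros. Then the outcome probability is ‖A_k W_n‖² = (j/n)·κ^{n-j}·(1-κ)^{j-1}, where the squared norm is ∑_x |(A_k W_n)(x)|². -/

import Mathlib

open scoped Classical

/-- The `n`-qubit W state: amplitude `1/√n` on strings with exactly one `1`. -/
noncomputable def Wstate (n : ℕ) : (Fin n → Fin 2) → ℂ := fun x =>
  if (Finset.univ.filter fun m => x m = 1).card = 1 then ((1 / Real.sqrt n : ℝ) : ℂ) else 0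

/-- Entries of the single-parameter Kraus operators:
`d(0,0)=√(1-κ)`, `d(0,1)=1`, `d(1,0)=√κ`, `d(1,1)=0`. -/
noncomputable def dEntry (κ : ℝ) : Fin 2 → Fin 2 → ℂ := fun a b =>
  if a = 0 then (if b = 0 then ((Real.sqrt (1 - κ) : ℝ) : ℂ) else 1)
  else (if b = 0 then ((Real.sqrt κ : ℝ) : ℂ) else 0)

/-- The product Kraus operator `A_k` associated with outcome string `k`. -/
noncomputable def krausApply (n : ℕ) (κ : ℝ) (k : Fin n → Fin 2)
    (v : (Fin n → Fin 2) → ℂ) : (Fin n → Fin 2) → ℂ :=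
  fun x => (∏ m, dEntry κ (k m) (x m)) * v x

lemma abs_d_sq (κ : ℝ) (hκ0 : 0 ≤ κ) (hκ1 : κ ≤ 1) (a b : Fin 2) :
    ‖dEntry κ a b‖ ^ 2 =
      if a = 0 then (if b = 0 then 1 - κ else 1) else (if b = 0 then κ else 0) := by
  fin_cases a <;> fin_cases b <;>
    simp [dEntry, Complex.norm_real, Real.norm_eq_abs, sq_abs, Real.sq_sqrt, hκ0, sub_nonneg.mpr hκ1]

/-- The outcome probability of an outcome string `k` with `j ≥ 1` zeros is
`‖A_k W_n‖² = (j/n)·κ^{n-j}·(1-κ)^{j-1}`. -/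
theorem outcome_probability (n : ℕ) (hn : 1 ≤ n) (κ : ℝ) (hκ : κ ∈ Set.Icc (0:ℝ) 1)
    (k : Fin n → Fin 2) (j : ℕ) (hj : j = (Finset.univ.filter fun m => k m = 0).card)
    (hj1 : 1 ≤ j) :
    ∑ x : Fin n → Fin 2, ‖krausApply n κ k (Wstate n) x‖ ^ 2 =
      ((j : ℝ) / (n : ℝ)) * κ ^ (n - j) * (1 - κ) ^ (j - 1) := by
  obtain ⟨hκ0, hκ1⟩ := hκ
  set e : Fin n → (Fin n → Fin 2) := fun i m => if m = i then 1 else 0 with he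
  have he_inj : Function.Injective e := by
    intro i i' h
    have := congrFun h i
    simp [he] at this
    by_contra hne
    exact hne this
  have hfilt : ∀ i, (Finset.univ.filter fun m => e i m = 1) = {i} := by
    intro i
    ext m
    simp only [Finset.mem_filter, Finset.mem_univ, true_and, Finset.mem_singleton, he]
    constructor
    · intro h; by_contra hne; simp [if_neg hne] at h
    · intro h; simp [h]
  -- restrict sum to image of e
  have hsum : ∑ x : Fin n → Fin 2, ‖krausApply n κ k (Wstate n) x‖ ^ 2
      = ∑ i : Fin n, ‖krausApply n κ k (Wstate n) (e i)‖ ^ 2 := by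
    have himg := Finset.sum_image (s := Finset.univ) (g := e)
      (f := fun x => ‖krausApply n κ k (Wstate n) x‖ ^ 2)
      (fun a _ b _ h => he_inj h)
    rw [← himg]
    apply (Finset.sum_subset (Finset.subset_univ _) _).symm
    intro x _ hx
    have hcard : (Finset.univ.filter fun m => x m = 1).card ≠ 1 := by
      intro hc
      obtain ⟨i, hi⟩ := Finset.card_eq_one.mp hc
      apply hx
      refine Finset.mem_image.mpr ⟨i, Finset.mem_univ i, ?_⟩
      funext m
      have hmem : ∀ m', x m' = 1 ↔ m' = i := by
        intro m'
        constructor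
        · intro h
          have hm' : m' ∈ Finset.filter (fun m => x m = 1) Finset.univ := by simp [h]
          rw [hi] at hm'; simpa using hm'
        · intro h
          have hm' : m' ∈ ({i} : Finset (Fin n)) := by simp [h]
          rw [← hi] at hm'; simpa using hm'
      by_cases hm : m = i
      · have h1 : x i = 1 := (hmem i).mpr rfl
        simp [he, hm, h1]
      · have h1 : x m ≠ 1 := fun h => hm ((hmem m).mp h)
        have h0 : x m = 0 := by omega
        simp [he, hm, h0]
    simp [krausApply, Wstate, hcard]
  rw [hsum]
  have hterm : ∀ i : Fin n, ‖krausApply n κ k (Wstate n) (e i)‖ ^ 2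
      = if k i = 0 then (1 - κ) ^ (j - 1) * κ ^ (n - j) * (1 / n) else 0 := by
    intro i
    have hW : Wstate n (e i) = ((1 / Real.sqrt n : ℝ) : ℂ) := by
      simp [Wstate, hfilt i]
    rw [krausApply, hW, norm_mul, mul_pow, norm_prod]
    have hWval : ‖((1 / Real.sqrt n : ℝ) : ℂ)‖ ^ 2 = 1 / n := by
      rw [Complex.norm_real, Real.norm_eq_abs, sq_abs, div_pow, one_pow, Real.sq_sqrt (by positivity)]
    rw [hWval, ← Finset.prod_pow]
    have hprod : ∏ m : Fin n, ‖dEntry κ (k m) (e i m)‖ ^ 2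
        = (if k i = 0 then 1 else 0) * ∏ m ∈ Finset.univ.erase i,
            (if k m = 0 then 1 - κ else κ) := by
      rw [← Finset.mul_prod_erase Finset.univ _ (Finset.mem_univ i)]
      congr 1
      · rw [abs_d_sq κ hκ0 hκ1]
        have : e i i = 1 := by simp [he]
        rw [this]
        norm_num
      · apply Finset.prod_congr rfl
        intro m hm
        have hmi : m ≠ i := Finset.ne_of_mem_erase hm
        have : e i m = 0 := by simp [he, hmi]
        rw [abs_d_sq κ hκ0 hκ1, this]
        by_cases h : k m = 0 <;> simp [h]
    rw [hprod]
    by_cases hki : k i = 0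
    · simp only [hki, if_true, one_mul, if_pos]
      have hcard1 : ((Finset.univ.erase i).filter fun m => k m = 0).card = j - 1 := by
        rw [Finset.filter_erase, Finset.card_erase_of_mem (by simp [hki]), ← hj]
      have hcard2 : ((Finset.univ.erase i).filter fun m => ¬ k m = 0).card = n - j := by
        have h1 := Finset.card_filter_add_card_filter_not
          (s := Finset.univ.erase i) (p := fun m => k m = 0)
        have h2 : (Finset.univ.erase i).card = n - 1 := by
          rw [Finset.card_erase_of_mem (Finset.mem_univ i)]; simp
        have hjn : j ≤ n := by
          rw [hj]
          exact le_trans (Finset.card_filter_le _ _) (by simp)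
        omega
      rw [Finset.prod_ite, Finset.prod_const, Finset.prod_const, hcard1, hcard2]
    · simp [hki]
  rw [Finset.sum_congr rfl (fun i _ => hterm i), Finset.sum_ite, Finset.sum_const,
    Finset.sum_const, ← hj]
  simp only [smul_zero, add_zero, nsmul_eq_mul]
  ring
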